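/- Let G be a finite geodetic graph on at least 3 vertices that is two-connected (i.e. G is connected and G − x is connected for every vertex x), is not a complete graph, and contains a clique on m vertices for some m > 1. Then G contains the star K_{1,m} as an induced subgraph. -/

import Mathlib

open SimpleGraph

/-- A graph is *geodetic* if it is connected and between any two vertices
there is exactly one shortest path (geodesic). -/
def IsGeodetic {V : Type*} (G : SimpleGraph V) : Prop :=
  G.Connected ∧ ∀ u v : V, ∃! p : G.Walk u v, p.IsPath ∧ p.length = G.dist u v

namespace GeodeticAux


variable {V : Type*} {G : SimpleGraph V}

noncomputable def geo (hG : IsGeodetic G) (u v : V) : G.Walk u v :=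
  (hG.2 u v).choose

lemma geo_isPath (hG : IsGeodetic G) (u v : V) : (geo hG u v).IsPath :=
  (hG.2 u v).choose_spec.1.1

lemma geo_length (hG : IsGeodetic G) (u v : V) : (geo hG u v).length = G.dist u v :=
  (hG.2 u v).choose_spec.1.2

lemma geo_unique (hG : IsGeodetic G) {u v : V} (p : G.Walk u v) (hp : p.IsPath)
    (hl : p.length = G.dist u v) : p = geo hG u v :=
  (hG.2 u v).choose_spec.2 p ⟨hp, hl⟩

lemma support_sum_le {u v w : V} (p : G.Walk u v) (hw : w ∈ p.support) :
    G.dist u w + G.dist w v ≤ p.length := by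
  classical
  have h1 : G.dist u w ≤ (p.takeUntil w hw).length := SimpleGraph.dist_le _
  have h2 : G.dist w v ≤ (p.dropUntil w hw).length := SimpleGraph.dist_le _
  have h3 := congrArg Walk.length (p.take_spec hw)
  rw [Walk.length_append] at h3
  omega

lemma geo_support_sum (hG : IsGeodetic G) {u v w : V} (hw : w ∈ (geo hG u v).support) :
    G.dist u w + G.dist w v = G.dist u v := by
  have h1 := support_sum_le _ hw
  rw [geo_length] at h1
  exact le_antisymm h1 (hG.1.dist_triangle)

noncomputable def nxt (hG : IsGeodetic G) (u v : V) : V := (geo hG u v).getVert 1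

lemma nxt_adj (hG : IsGeodetic G) {u v : V} (h : u ≠ v) : G.Adj u (nxt hG u v) := by
  have hpos : 0 < (geo hG u v).length := by
    rw [geo_length]; exact hG.1.pos_dist_of_ne h
  have := (geo hG u v).adj_getVert_succ hpos
  simpa [Walk.getVert_zero, nxt] using this

lemma nxt_mem (hG : IsGeodetic G) {u v : V} (h : u ≠ v) :
    nxt hG u v ∈ (geo hG u v).support := by
  rw [Walk.mem_support_iff_exists_getVert]
  refine ⟨1, rfl, ?_⟩
  rw [geo_length]
  exact hG.1.pos_dist_of_ne h

lemma nxt_dist (hG : IsGeodetic G) {u v : V} (h : u ≠ v) :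
    G.dist (nxt hG u v) v + 1 = G.dist u v := by
  have hsum := geo_support_sum hG (nxt_mem hG h)
  have h1 : G.dist u (nxt hG u v) = 1 := dist_eq_one_iff_adj.mpr (nxt_adj hG h)
  omega

lemma first_step (hG : IsGeodetic G) {v a b : V} (hva : v ≠ a)
    (hab : G.Adj a b) (hd : G.dist v b = G.dist v a + 1) :
    nxt hG v b = nxt hG v a := by
  have hadj : G.Adj v (nxt hG v a) := nxt_adj hG hva
  have hyd : G.dist (nxt hG v a) a + 1 = G.dist v a := nxt_dist hG hva
  have hab1 : G.dist a b = 1 := dist_eq_one_iff_adj.mpr hab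
  have hyb_le : G.dist (nxt hG v a) b ≤ G.dist (nxt hG v a) a + G.dist a b :=
    hG.1.dist_triangle
  have hyb_ge : G.dist v b ≤ G.dist v (nxt hG v a) + G.dist (nxt hG v a) b :=
    hG.1.dist_triangle
  have hdvy : G.dist v (nxt hG v a) = 1 := dist_eq_one_iff_adj.mpr hadj
  have hyb : G.dist (nxt hG v a) b = G.dist v a := by omega
  have hWpath : (Walk.cons hadj (geo hG (nxt hG v a) b)).IsPath := by
    apply (geo_isPath hG _ _).cons
    intro hmem
    have hsle := support_sum_le _ hmem
    rw [geo_length] at hsle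
    omega
  have hWlen : (Walk.cons hadj (geo hG (nxt hG v a) b)).length = G.dist v b := by
    rw [Walk.length_cons, geo_length]; omega
  have hW := geo_unique hG _ hWpath hWlen
  have := congrArg (fun q => Walk.getVert q 1) hW
  simp only [Walk.getVert_cons_succ, Walk.getVert_zero] at this
  exact this.symm

lemma no_two (hG : IsGeodetic G) {A : Finset V} (hclA : G.IsClique (A : Set V))
    (hmax : ∀ w, w ∉ A → ∃ u ∈ A, ¬ G.Adj w u)
    {v a b : V} (hv : v ∉ A) (ha : a ∈ A) (hb : b ∈ A) (hab : a ≠ b)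
    (h1 : G.Adj v a) (h2 : G.Adj v b) : False := by
  obtain ⟨u, hu, hnadj⟩ := hmax v hv
  apply hnadj
  rcases eq_or_ne u a with rfl | hua
  · exact h1
  rcases eq_or_ne u b with rfl | hub
  · exact h2
  by_contra hn
  have hvu : v ≠ u := fun h => hv (h ▸ hu)
  have hau : G.Adj a u := hclA ha hu (Ne.symm hua)
  have hbu : G.Adj b u := hclA hb hu (Ne.symm hub)
  have hd2 : G.dist v u = 2 := by
    have hle : G.dist v u ≤ 2 := by
      have := SimpleGraph.dist_le (Walk.cons h1 (Walk.cons hau Walk.nil))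
      simpa using this
    have h0 : G.dist v u ≠ 0 := fun h => hvu (hG.1.dist_eq_zero_iff.mp h)
    have h1' : G.dist v u ≠ 1 := fun h => hn (dist_eq_one_iff_adj.mp h)
    omega
  have hP1 : (Walk.cons h1 (Walk.cons hau Walk.nil)).IsPath := by
    rw [Walk.isPath_def]
    simp [h1.ne, hvu, hau.ne]
  have hP2 : (Walk.cons h2 (Walk.cons hbu Walk.nil)).IsPath := by
    rw [Walk.isPath_def]
    simp [h2.ne, hvu, hbu.ne]
  have hL1 : (Walk.cons h1 (Walk.cons hau Walk.nil)).length = G.dist v u := by simp [hd2]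
  have hL2 : (Walk.cons h2 (Walk.cons hbu Walk.nil)).length = G.dist v u := by simp [hd2]
  have hE := (geo_unique hG _ hP1 hL1).trans (geo_unique hG _ hP2 hL2).symm
  have := congrArg (fun q => Walk.getVert q 1) hE
  simp only [Walk.getVert_cons_succ, Walk.getVert_zero] at this
  exact hab this

lemma mixed_unique (hG : IsGeodetic G) {A : Finset V} (hclA : G.IsClique (A : Set V))
    (hmax : ∀ w, w ∉ A → ∃ u ∈ A, ¬ G.Adj w u) :
    ∀ (k : ℕ) (v : V) {a b b' : V}, v ∉ A → a ∈ A → b ∈ A → b' ∈ A → a ≠ b →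
      G.dist v a = k → G.dist v b = k → G.dist v b' = k + 1 → False := by
  intro k
  induction k with
  | zero =>
    intro v a b b' hv ha hb hb' hab hda hdb hdb'
    have : v = a := hG.1.dist_eq_zero_iff.mp hda
    exact hv (this ▸ ha)
  | succ k ih =>
    intro v a b b' hv ha hb hb' hab hda hdb hdb'
    rcases Nat.eq_zero_or_pos k with rfl | hkpos
    · exact no_two hG hclA hmax hv ha hb hab (dist_eq_one_iff_adj.mp hda)
        (dist_eq_one_iff_adj.mp hdb)
    · have hva : v ≠ a := by
        intro h; subst h; rw [dist_self] at hda; omega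
      have hvb : v ≠ b := by
        intro h; subst h; rw [dist_self] at hdb; omega
      have hvb' : v ≠ b' := by
        intro h; subst h; rw [dist_self] at hdb'; omega
      have hab' : a ≠ b' := fun h => by subst h; omega
      have hbb' : b ≠ b' := fun h => by subst h; omega
      have h1 : nxt hG v b' = nxt hG v a :=
        first_step hG hva (hclA ha hb' hab') (by omega)
      have h2 : nxt hG v b' = nxt hG v b :=
        first_step hG hvb (hclA hb hb' hbb') (by omega)
      have hya : G.dist (nxt hG v a) a + 1 = k + 1 := hda ▸ nxt_dist hG hva
      have hyb0 : G.dist (nxt hG v b) b + 1 = k + 1 := hdb ▸ nxt_dist hG hvb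
      have hyb'0 : G.dist (nxt hG v b') b' + 1 = k + 2 := hdb' ▸ nxt_dist hG hvb'
      rw [h2] at hyb'0  -- no: h2 : nxt v b' = nxt v b; rewrite in hyb'0 replaces lhs
      rw [← h1, h2] at hya
      -- now everything in terms of y := nxt hG v b
      set y := nxt hG v b with hy
      have hyA : y ∉ A := by
        intro hyA
        rcases eq_or_ne y b' with rfl | hne
        · rw [dist_self] at hyb'0; omega
        · have : G.dist y b' = 1 := dist_eq_one_iff_adj.mpr (hclA hyA hb' hne)
          omega
      exact ih y hyA ha hb hb' hab (by omega) (by omega) (by omega)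

lemma gate_edge (hG : IsGeodetic G) {A : Finset V} (hclA : G.IsClique (A : Set V))
    {v w a b : V}
    (hv : v ∉ A) (hw : w ∉ A) (ha : a ∈ A) (hb : b ∈ A) (hab : a ≠ b)
    (hvw : G.Adj v w)
    (hga : ∀ u ∈ A, u ≠ a → G.dist v u = G.dist v a + 1)
    (hgb : ∀ u ∈ A, u ≠ b → G.dist w u = G.dist w b + 1) : False := by
  have hva : v ≠ a := fun h => hv (h ▸ ha)
  have hwb : w ≠ b := fun h => hw (h ▸ hb)
  have hdva : 0 < G.dist v a := hG.1.pos_dist_of_ne hva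
  have hdvb : G.dist v b = G.dist v a + 1 := hga b hb (Ne.symm hab)
  have hdwa : G.dist w a = G.dist w b + 1 := hgb a ha hab
  have hd1 : G.dist v w = 1 := dist_eq_one_iff_adj.mpr hvw
  have hd2 : G.dist w v = 1 := by rw [dist_comm]; exact hd1
  have ht1 : G.dist v b ≤ G.dist v w + G.dist w b := hG.1.dist_triangle
  have ht2 : G.dist w a ≤ G.dist w v + G.dist v a := hG.1.dist_triangle
  have t_eq : G.dist v a = G.dist w b := by omega
  have hW1path : (Walk.cons hvw (geo hG w b)).IsPath := by
    apply (geo_isPath hG _ _).cons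
    intro hmem
    have hsle := support_sum_le _ hmem
    rw [geo_length] at hsle
    omega
  have hW1len : (Walk.cons hvw (geo hG w b)).length = G.dist v b := by
    rw [Walk.length_cons, geo_length]; omega
  have hadjab : G.Adj a b := hclA ha hb hab
  have hbns : b ∉ (geo hG v a).support := by
    intro hmem
    have hsle := support_sum_le _ hmem
    rw [geo_length] at hsle
    omega
  have hW2path : ((geo hG v a).concat hadjab).IsPath := by
    rw [Walk.isPath_def, Walk.support_concat, List.nodup_append]
    refine ⟨(geo_isPath hG v a).support_nodup, List.nodup_singleton _, ?_⟩
    intro x hx y hy hxy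
    rw [List.mem_singleton] at hy
    subst hy; subst hxy; exact hbns hx
  have hW2len : ((geo hG v a).concat hadjab).length = G.dist v b := by
    rw [Walk.length_concat, geo_length]; omega
  have hE := (geo_unique hG _ hW1path hW1len).trans (geo_unique hG _ hW2path hW2len).symm
  have hwin : w ∈ (Walk.cons hvw (geo hG w b)).support := by
    simp [Walk.support_cons]
  rw [hE, Walk.support_concat, List.mem_append] at hwin
  rcases hwin with hwin | hwin
  · have hsle := support_sum_le _ hwin
    rw [geo_length] at hsle
    omega
  · rw [List.mem_singleton] at hwin
    exact hw (hwin ▸ hb)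

end GeodeticAux

open GeodeticAux in
set_option maxHeartbeats 1000000 in
/-- Let `G` be a finite geodetic two-connected graph on at least 3 vertices which is not
complete and contains a clique on `m > 1` vertices.  Then `G` contains the star `K_{1,m}`
as an induced subgraph. -/
theorem stmt_3 {V : Type*} [Fintype V] (G : SimpleGraph V) (hG : IsGeodetic G)
    (hcard : 3 ≤ Fintype.card V)
    (htwo : ∀ x : V, (G.induce {y : V | y ≠ x}).Connected)
    (hnotcomplete : G ≠ ⊤)
    (m : ℕ) (hm : 1 < m) (s : Finset V) (hs : s.card = m) (hclique : G.IsClique s) :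
    Nonempty (completeBipartiteGraph (Fin 1) (Fin m) ↪g G) := by
  classical
  have hconn : G.Connected := hG.1
  -- a maximal clique A containing s
  have hsne : (Finset.univ.filter
      (fun t : Finset V => s ⊆ t ∧ G.IsClique (t : Set V))).Nonempty :=
    ⟨s, by simp [hclique]⟩
  obtain ⟨A, hAmem, hAmax0⟩ := Finset.exists_max_image _ (fun t => t.card) hsne
  rw [Finset.mem_filter] at hAmem
  obtain ⟨-, hsA, hclA⟩ := hAmem
  have hAmax' : ∀ t : Finset V, s ⊆ t → G.IsClique (t : Set V) → t.card ≤ A.card :=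
    fun t h1 h2 => hAmax0 t (by simp [h1, h2])
  have hmA : m ≤ A.card := hs ▸ Finset.card_le_card hsA
  have hA2 : 2 ≤ A.card := le_trans hm hmA
  -- no vertex outside A is adjacent to all of A
  have hmax : ∀ w, w ∉ A → ∃ u ∈ A, ¬ G.Adj w u := by
    intro w hwA
    by_contra hcon
    push_neg at hcon
    have hcl : G.IsClique ((insert w A : Finset V) : Set V) := by
      rw [Finset.coe_insert]
      exact hclA.insert (fun b hb _ => hcon b hb)
    have h2 := hAmax' (insert w A) (hsA.trans (Finset.subset_insert _ _)) hcl
    rw [Finset.card_insert_of_notMem hwA] at h2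
    omega
  -- there is a vertex outside A
  have hout : ∃ x, x ∉ A := by
    by_contra h
    push_neg at h
    exact hnotcomplete (le_antisymm le_top
      (fun {u v} huv => hclA (h u) (h v) ((top_adj u v).mp huv)))
  -- there is an equidistant vertex at distance ≥ 2 from all of A
  have hEq : ∃ k, (2 ≤ k ∧ ∃ c, ∀ a ∈ A, G.dist c a = k) := by
    by_contra hno
    push_neg at hno
    -- every vertex outside A is "gated"
    have hgate : ∀ v, v ∉ A → ∃ g ∈ A, ∀ a ∈ A, a ≠ g →
        G.dist v a = G.dist v g + 1 := by
      intro v hv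
      have hAne : A.Nonempty := Finset.card_pos.mp (by omega)
      obtain ⟨g, hgA, hgmin⟩ := A.exists_min_image (G.dist v) hAne
      refine ⟨g, hgA, ?_⟩
      intro a haA hag
      have hvg : v ≠ g := fun h => hv (h ▸ hgA)
      have hk1 : 0 < G.dist v g := hconn.pos_dist_of_ne hvg
      have hga1 : G.dist g a = 1 := dist_eq_one_iff_adj.mpr (hclA hgA haA (Ne.symm hag))
      have htr : G.dist v a ≤ G.dist v g + G.dist g a := hconn.dist_triangle
      have hge : G.dist v g ≤ G.dist v a := hgmin a haA
      rcases eq_or_lt_of_le hge with heq | hlt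
      · exfalso
        rcases Nat.lt_or_ge (G.dist v g) 2 with hk | hk
        · -- dist v g = 1, v adjacent to a and g
          have hdva : G.dist v a = 1 := by omega
          have hdvg : G.dist v g = 1 := by omega
          exact no_two hG hclA hmax hv haA hgA hag
            (dist_eq_one_iff_adj.mp hdva) (dist_eq_one_iff_adj.mp hdvg)
        · obtain ⟨b', hb'A, hb'⟩ := hno (G.dist v g) hk v
          have hgb' : b' ≠ g := by rintro rfl; exact hb' rfl
          have hb'1 : G.dist g b' = 1 :=
            dist_eq_one_iff_adj.mpr (hclA hgA hb'A (Ne.symm hgb'))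
          have htr2 : G.dist v b' ≤ G.dist v g + G.dist g b' := hconn.dist_triangle
          have hge2 : G.dist v g ≤ G.dist v b' := hgmin b' hb'A
          have hdb' : G.dist v b' = G.dist v g + 1 := by omega
          exact mixed_unique hG hclA hmax (G.dist v g) v hv haA hgA hb'A hag
            heq.symm rfl hdb'
      · omega
    -- component argument : contradiction with two-connectivity
    obtain ⟨x, hx⟩ := hout
    obtain ⟨g1, hg1A, hxg⟩ := hgate x hx
    obtain ⟨a2, ha2A, ha2g⟩ := Finset.exists_mem_ne (s := A) (by omega) g1
    have hxne : x ≠ g1 := fun h => hx (h ▸ hg1A)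
    have hreach := (htwo g1).preconnected
      (⟨x, hxne⟩ : {y : V | y ≠ g1}) (⟨a2, ha2g⟩ : {y : V | y ≠ g1})
    obtain ⟨p⟩ := hreach
    have key : ∀ (u w : {y : V | y ≠ g1}) (q : (G.induce {y : V | y ≠ g1}).Walk u w),
        ((u : V) ∉ A ∧ ∀ a ∈ A, a ≠ g1 → G.dist (u : V) a = G.dist (u : V) g1 + 1) →
        ((w : V) ∉ A ∧ ∀ a ∈ A, a ≠ g1 → G.dist (w : V) a = G.dist (w : V) g1 + 1) := by
      intro u w q
      induction q with
      | nil => exact id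
      | @cons u z w h q ih =>
        intro hu
        apply ih
        have hadj : G.Adj (u : V) (z : V) := h
        by_cases hzA : (z : V) ∈ A
        · exfalso
          have hz1 : (z : V) ≠ g1 := z.2
          have hd := hu.2 (z : V) hzA hz1
          have hd1 : G.dist (u : V) (z : V) = 1 := dist_eq_one_iff_adj.mpr hadj
          have hpos : 0 < G.dist (u : V) g1 :=
            hconn.pos_dist_of_ne (fun hh => hu.1 (by rw [hh]; exact hg1A))
          omega
        · obtain ⟨g2, hg2A, hg2⟩ := hgate (z : V) hzA
          rcases eq_or_ne g2 g1 with rfl | hgg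
          · exact ⟨hzA, hg2⟩
          · exact absurd (gate_edge hG hclA hu.1 hzA hg1A hg2A (Ne.symm hgg)
              hadj hu.2 hg2) not_false
    have hfinal := key _ _ p ⟨hx, hxg⟩
    exact hfinal.1 ha2A
  -- minimal equidistance value
  have hdp : DecidablePred (fun k => 2 ≤ k ∧ ∃ c, ∀ a ∈ A, G.dist c a = k) :=
    fun _ => Classical.dec _
  set k := Nat.find hEq with hkdef
  obtain ⟨hk2, c, hcd⟩ := Nat.find_spec hEq
  rw [← hkdef] at hk2 hcd
  have hmin : ∀ k', k' < k → ¬ (2 ≤ k' ∧ ∃ c', ∀ a ∈ A, G.dist c' a = k') :=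
    fun k' h => Nat.find_min hEq h
  have hcA : c ∉ A := by
    intro h
    have := hcd c h
    rw [SimpleGraph.dist_self] at this
    omega
  have hcne : ∀ a ∈ A, c ≠ a := fun a ha h => hcA (h ▸ ha)
  have hyadj : ∀ a ∈ A, G.Adj c (nxt hG c a) := fun a ha => nxt_adj hG (hcne a ha)
  have hydist : ∀ a ∈ A, G.dist (nxt hG c a) a + 1 = k := by
    intro a ha
    rw [← hcd a ha]
    exact nxt_dist hG (hcne a ha)
  have hyc1 : ∀ a ∈ A, G.dist c (nxt hG c a) = 1 :=
    fun a ha => dist_eq_one_iff_adj.mpr (hyadj a ha)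
  have hynotA : ∀ a ∈ A, nxt hG c a ∉ A := by
    intro a ha hmem
    have h1 := hcd _ hmem
    have h2 := hyc1 a ha
    omega
  -- distance from nxt c a to any clique vertex is k-1 or k
  have hybound : ∀ a ∈ A, ∀ b ∈ A,
      G.dist (nxt hG c a) b + 1 = k ∨ G.dist (nxt hG c a) b = k := by
    intro a ha b hb
    have hge : G.dist c b ≤ G.dist c (nxt hG c a) + G.dist (nxt hG c a) b :=
      hconn.dist_triangle
    rw [hcd b hb, hyc1 a ha] at hge
    have hya := hydist a ha
    rcases eq_or_ne b a with rfl | hba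
    · omega
    · have hab1 : G.dist a b = 1 := dist_eq_one_iff_adj.mpr (hclA ha hb (Ne.symm hba))
      have hle : G.dist (nxt hG c a) b ≤ G.dist (nxt hG c a) a + G.dist a b :=
        hconn.dist_triangle
      omega
  -- injectivity of a ↦ nxt c a on A
  have hyinj : ∀ a ∈ A, ∀ b ∈ A, a ≠ b → nxt hG c a ≠ nxt hG c b := by
    intro a ha b hb hab heq
    have hya := hydist a ha
    have hyb := hydist b hb
    rw [← heq] at hyb
    by_cases hfar : ∃ b' ∈ A, G.dist (nxt hG c a) b' = k
    · obtain ⟨b', hb'A, hb'⟩ := hfar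
      refine mixed_unique hG hclA hmax (k - 1) (nxt hG c a) (hynotA a ha)
        ha hb hb'A hab (by omega) (by omega) (by omega)
    · push_neg at hfar
      have hall : ∀ b' ∈ A, G.dist (nxt hG c a) b' + 1 = k := by
        intro b' hb'
        rcases hybound a ha b' hb' with h | h
        · exact h
        · exact absurd h (hfar b' hb')
      rcases Nat.lt_or_ge k 3 with hk3 | hk3
      · -- k = 2 : nxt c a adjacent to both a and b
        have h1 : G.dist (nxt hG c a) a = 1 := by omega
        have h2 : G.dist (nxt hG c a) b = 1 := by
          have := hall b hb; omega
        exact no_two hG hclA hmax (hynotA a ha) ha hb hab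
          (dist_eq_one_iff_adj.mp h1) (dist_eq_one_iff_adj.mp h2)
      · exact hmin (k - 1) (by omega) ⟨by omega, nxt hG c a, fun b' hb' => by
          have := hall b' hb'; omega⟩
  -- non-adjacency of the leaves
  have hynonadj : ∀ a ∈ A, ∀ b ∈ A, a ≠ b →
      ¬ G.Adj (nxt hG c a) (nxt hG c b) := by
    intro a ha b hb hab hadj
    have hne := hyinj a ha b hb hab
    have hya := hydist a ha
    have hyb := hydist b hb
    have hcb := hcd b hb
    have hca := hcd a ha
    -- first : G.dist (nxt c a) b = k
    have hyab : G.dist (nxt hG c a) b = k := by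
      rcases hybound a ha b hb with h | h
      · exfalso
        have hWpath : (Walk.cons (hyadj a ha) (geo hG (nxt hG c a) b)).IsPath := by
          apply (geo_isPath hG _ _).cons
          intro hmem
          have hsle := support_sum_le _ hmem
          rw [geo_length] at hsle
          have : G.dist (nxt hG c a) c = 1 := by
            rw [SimpleGraph.dist_comm]; exact hyc1 a ha
          omega
        have hWlen : (Walk.cons (hyadj a ha) (geo hG (nxt hG c a) b)).length
            = G.dist c b := by
          rw [Walk.length_cons, geo_length]; omega
        have hW := geo_unique hG _ hWpath hWlen
        have hgv := congrArg (fun q => Walk.getVert q 1) hW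
        simp only [Walk.getVert_cons_succ, Walk.getVert_zero] at hgv
        exact hne hgv
      · exact h
    have hadjab : G.Adj a b := hclA ha hb hab
    have hW1path : (Walk.cons hadj (geo hG (nxt hG c b) b)).IsPath := by
      apply (geo_isPath hG _ _).cons
      intro hmem
      have hsle := support_sum_le _ hmem
      rw [geo_length] at hsle
      omega
    have hW1len : (Walk.cons hadj (geo hG (nxt hG c b) b)).length
        = G.dist (nxt hG c a) b := by
      rw [Walk.length_cons, geo_length]; omega
    have hbns : b ∉ (geo hG (nxt hG c a) a).support := by
      intro hmem
      have hsle := support_sum_le _ hmem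
      rw [geo_length] at hsle
      omega
    have hW2path : ((geo hG (nxt hG c a) a).concat hadjab).IsPath := by
      rw [Walk.isPath_def, Walk.support_concat,
        List.nodup_append]
      refine ⟨(geo_isPath hG _ _).support_nodup, List.nodup_singleton _, ?_⟩
      intro x hxs y hy hxy
      rw [List.mem_singleton] at hy
      subst hy; subst hxy; exact hbns hxs
    have hW2len : ((geo hG (nxt hG c a) a).concat hadjab).length
        = G.dist (nxt hG c a) b := by
      rw [Walk.length_concat, geo_length]; omega
    have hE := (geo_unique hG _ hW1path hW1len).trans
      (geo_unique hG _ hW2path hW2len).symm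
    have hwin : nxt hG c b ∈ (Walk.cons hadj (geo hG (nxt hG c b) b)).support := by
      simp [Walk.support_cons]
    rw [hE, Walk.support_concat, List.mem_append] at hwin
    rcases hwin with hwin | hwin
    · have hsle := support_sum_le _ hwin
      rw [geo_length] at hsle
      have hd1 : G.dist (nxt hG c a) (nxt hG c b) = 1 := dist_eq_one_iff_adj.mpr hadj
      have hge : G.dist c a ≤ G.dist c (nxt hG c b) + G.dist (nxt hG c b) a :=
        hconn.dist_triangle
      rw [hca, hyc1 b hb] at hge
      omega
    · rw [List.mem_singleton] at hwin
      exact hynotA b hb (by rw [hwin]; exact hb)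
  -- select m clique vertices
  obtain ⟨T, hTA, hTcard⟩ := Finset.exists_subset_card_eq hmA
  have hι : ∀ i : Fin m, ((T.equivFin.symm (Fin.cast hTcard.symm i)) : V) ∈ A :=
    fun i => hTA (T.equivFin.symm (Fin.cast hTcard.symm i)).2
  set ι : Fin m → V := fun i => ((T.equivFin.symm (Fin.cast hTcard.symm i)) : V)
    with hιdef
  have hιinj : Function.Injective ι := by
    intro i j hij
    have := Subtype.ext hij
    have h2 := T.equivFin.symm.injective this
    exact Fin.ext (by simpa using congrArg Fin.val h2)
  -- build the embedding
  refine ⟨?_⟩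
  refine ⟨⟨Sum.elim (fun _ => c) (fun i => nxt hG c (ι i)), ?_⟩, ?_⟩
  · -- injectivity
    rintro (i | i) (j | j) h
    · simp [Subsingleton.elim i j]
    · exact absurd (h : c = nxt hG c (ι j)) (G.ne_of_adj (hyadj _ (hι j)))
    · exact absurd (h : nxt hG c (ι i) = c).symm (G.ne_of_adj (hyadj _ (hι i)))
    · simp only [Sum.elim_inr] at h
      congr 1
      by_contra hij
      have : ι i ≠ ι j := fun hh => hij (hιinj hh)
      exact hyinj _ (hι i) _ (hι j) this h
  · -- map_rel_iff
    rintro (i | i) (j | j)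
    · change G.Adj c c ↔ _
      simp [completeBipartiteGraph]
    · change G.Adj c (nxt hG c (ι j)) ↔ _
      simpa [completeBipartiteGraph] using hyadj _ (hι j)
    · change G.Adj (nxt hG c (ι i)) c ↔ _
      constructor
      · intro _; simp [completeBipartiteGraph]
      · intro _; exact (hyadj _ (hι i)).symm
    · change G.Adj (nxt hG c (ι i)) (nxt hG c (ι j)) ↔ _
      constructor
      · intro h
        exfalso
        rcases eq_or_ne i j with rfl | hij
        · exact G.irrefl h
        · exact hynonadj _ (hι i) _ (hι j)
            (fun hh => hij (hιinj hh)) h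
      · intro h
        simp [completeBipartiteGraph] at h
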